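/- Let G be a connected finite simple graph on n > 1 vertices with the property that every set of γ(G) vertices of G is a dominating set of G, and let k be an integer with γ(G) < k < n. Then the k-dominating graph D_k(G) is Eulerian if and only if either (i) G is the complete graph K_n with n odd and k = 2, or (ii) n is even, n ≥ 4, G is the cocktail party graph on n vertices, and k is even. -/

import Mathlib

set_option linter.unusedSectionVars false
set_option maxHeartbeats 1000000

open SimpleGraph Set

/-- `D` is a dominating set of `G`: every vertex not in `D` has a neighbour in `D`. -/
def IsDomSet {V : Type*} (G : SimpleGraph V) (D : Set V) : Prop :=
  ∀ v ∉ D, ∃ u ∈ D, G.Adj u v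

/-- The dominating graph of `G`: vertices are dominating sets of `G`, two dominating
sets are adjacent iff their symmetric difference has exactly one element. -/
def DomGraph {V : Type*} (G : SimpleGraph V) :
    SimpleGraph {D : Set V // IsDomSet G D} where
  Adj A B := (symmDiff A.1 B.1).ncard = 1
  symm := ⟨fun A B h => by
    have h' : (symmDiff A.1 B.1).ncard = 1 := h
    show (symmDiff B.1 A.1).ncard = 1
    rwa [symmDiff_comm]⟩
  loopless := ⟨fun A h => by
    have h' : (symmDiff A.1 A.1).ncard = 1 := h
    simp [symmDiff_self, Set.bot_eq_empty] at h'⟩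

/-- The `k`-dominating graph of `G`: vertices are dominating sets of `G` of cardinality
at most `k`, two such sets are adjacent iff their symmetric difference has exactly one
element. -/
def KDomGraph {V : Type*} (G : SimpleGraph V) (k : ℕ) :
    SimpleGraph {D : Set V // IsDomSet G D ∧ D.ncard ≤ k} where
  Adj A B := (symmDiff A.1 B.1).ncard = 1
  symm := ⟨fun A B h => by
    have h' : (symmDiff A.1 B.1).ncard = 1 := h
    show (symmDiff B.1 A.1).ncard = 1
    rwa [symmDiff_comm]⟩
  loopless := ⟨fun A h => by
    have h' : (symmDiff A.1 A.1).ncard = 1 := h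
    simp [symmDiff_self, Set.bot_eq_empty] at h'⟩

/-- A graph is Eulerian iff every vertex has even degree and any two edges lie in the
same connected component (i.e. at most one component contains an edge). -/
def IsEulerian {W : Type*} (H : SimpleGraph W) : Prop :=
  (∀ v : W, Even (H.neighborSet v).ncard) ∧
  ∀ u v x y : W, H.Adj u v → H.Adj x y → H.Reachable u x

/-- `G` is a cocktail party graph: the complete graph with a perfect matching removed,
i.e. there is a fixed-point-free involutive pairing `f` of the vertices such that two
distinct vertices are adjacent iff they are not paired. -/
def IsCocktailParty {V : Type*} (G : SimpleGraph V) : Prop :=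
  ∃ f : V → V, Function.Involutive f ∧ (∀ v, f v ≠ v) ∧
    ∀ u v, G.Adj u v ↔ u ≠ v ∧ f u ≠ v

/-- The domination number of `G`: the minimum cardinality of a dominating set. -/
noncomputable def domNumber {V : Type*} (G : SimpleGraph V) : ℕ :=
  sInf {n | ∃ D : Set V, IsDomSet G D ∧ D.ncard = n}


section SymmDiffAux
variable {α : Type*} {A B : Set α} {v : α}

lemma symmDiff_insert_self (hv : v ∉ A) : symmDiff A (insert v A) = {v} := by
  ext x
  simp only [Set.mem_symmDiff, Set.mem_insert_iff, Set.mem_singleton_iff]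
  by_cases hx : x = v
  · subst hx; tauto
  · tauto

lemma symmDiff_diff_singleton_self (hv : v ∈ A) : symmDiff A (A \ {v}) = {v} := by
  ext x
  simp only [Set.mem_symmDiff, Set.mem_diff, Set.mem_singleton_iff]
  by_cases hx : x = v
  · subst hx; tauto
  · tauto

lemma symmDiff_insert_left (hb : v ∈ B) (hbA : v ∉ A) :
    symmDiff (insert v A) B = symmDiff A B \ {v} := by
  ext x
  simp only [Set.mem_symmDiff, Set.mem_insert_iff, Set.mem_diff, Set.mem_singleton_iff]
  by_cases hx : x = v
  · subst hx; tauto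
  · tauto

lemma symmDiff_diff_left (ha : v ∈ A) (haB : v ∉ B) :
    symmDiff (A \ {v}) B = symmDiff A B \ {v} := by
  ext x
  simp only [Set.mem_symmDiff, Set.mem_diff, Set.mem_singleton_iff]
  by_cases hx : x = v
  · subst hx; tauto
  · tauto

lemma ncard_symmDiff_eq_one_iff [Finite α] :
    (symmDiff A B).ncard = 1 ↔
      (∃ v, v ∉ A ∧ B = insert v A) ∨ (∃ v, v ∈ A ∧ B = A \ {v}) := by
  constructor
  · intro h1
    obtain ⟨v, hv⟩ := Set.ncard_eq_one.mp h1
    have key : ∀ x, (x ∈ A ∧ x ∉ B ∨ x ∈ B ∧ x ∉ A) ↔ x = v := by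
      intro x
      rw [← Set.mem_symmDiff, hv, Set.mem_singleton_iff]
    by_cases hvA : v ∈ A
    · right
      refine ⟨v, hvA, ?_⟩
      ext x
      simp only [Set.mem_diff, Set.mem_singleton_iff]
      have h1 := key x
      have h2 := key v
      by_cases hx : x = v
      · subst hx; tauto
      · tauto
    · left
      refine ⟨v, hvA, ?_⟩
      ext x
      simp only [Set.mem_insert_iff]
      have h1 := key x
      have h2 := key v
      by_cases hx : x = v
      · subst hx; tauto
      · tauto
  · rintro (⟨v, hv, rfl⟩ | ⟨v, hv, rfl⟩)
    · rw [symmDiff_insert_self hv]; exact Set.ncard_singleton v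
    · rw [symmDiff_diff_singleton_self hv]; exact Set.ncard_singleton v

end SymmDiffAux

section DomAux
variable {V : Type*} [Fintype V] {G : SimpleGraph V}

lemma isDomSet_of_subset {A B : Set V} (hA : IsDomSet G A) (hAB : A ⊆ B) : IsDomSet G B := by
  intro v hv
  obtain ⟨u, hu, ha⟩ := hA v (fun hvA => hv (hAB hvA))
  exact ⟨u, hAB hu, ha⟩

lemma isDomSet_univ : IsDomSet G Set.univ := fun v hv => absurd (Set.mem_univ v) hv

lemma exists_domNumber_set : ∃ D : Set V, IsDomSet G D ∧ D.ncard = domNumber G := by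
  have hne : {n | ∃ D : Set V, IsDomSet G D ∧ D.ncard = n}.Nonempty :=
    ⟨Fintype.card V, Set.univ, isDomSet_univ, by rw [Set.ncard_univ, Nat.card_eq_fintype_card]⟩
  exact Nat.sInf_mem hne

lemma domNumber_le_ncard {D : Set V} (hD : IsDomSet G D) : domNumber G ≤ D.ncard :=
  Nat.sInf_le ⟨D, hD, rfl⟩

lemma one_le_domNumber [Nonempty V] (G : SimpleGraph V) : 1 ≤ domNumber G := by
  obtain ⟨D, hD, hcard⟩ := exists_domNumber_set (G := G)
  rcases Nat.eq_zero_or_pos (domNumber G) with h0 | h1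
  · exfalso
    rw [h0, Set.ncard_eq_zero (Set.toFinite D)] at hcard
    subst hcard
    obtain ⟨u, hu, -⟩ := hD (Classical.arbitrary V) (Set.notMem_empty _)
    exact Set.notMem_empty u hu
  · exact h1

lemma isDomSet_iff_le (h : ∀ S : Set V, S.ncard = domNumber G → IsDomSet G S)
    {S : Set V} : IsDomSet G S ↔ domNumber G ≤ S.ncard := by
  refine ⟨domNumber_le_ncard, fun hle => ?_⟩
  obtain ⟨T, hTS, hT⟩ := Set.exists_subset_card_eq hle
  exact isDomSet_of_subset (h T hT) hTS

/-- The set of non-neighbours of `w` (other than `w` itself). -/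
def NH (G : SimpleGraph V) (w : V) : Set V := {x | x ≠ w ∧ ¬ G.Adj w x}

lemma mem_NH_comm {x y : V} : x ∈ NH G y ↔ y ∈ NH G x := by
  unfold NH
  simp only [Set.mem_setOf_eq]
  constructor
  · rintro ⟨h1, h2⟩; exact ⟨h1.symm, fun ha => h2 ha.symm⟩
  · rintro ⟨h1, h2⟩; exact ⟨h1.symm, fun ha => h2 ha.symm⟩

lemma ncard_NH_lt (h : ∀ S : Set V, S.ncard = domNumber G → IsDomSet G S)
    [Nonempty V] (w : V) : (NH G w).ncard < domNumber G := by
  by_contra hc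
  push_neg at hc
  obtain ⟨T, hTS, hT⟩ := Set.exists_subset_card_eq hc
  have hTdom := h T hT
  have hwT : w ∉ T := fun hw => (hTS hw).1 rfl
  obtain ⟨u, huT, hadj⟩ := hTdom w hwT
  exact (hTS huT).2 hadj.symm

lemma exists_NH_eq (h : ∀ S : Set V, S.ncard = domNumber G → IsDomSet G S)
    [Nonempty V] (hγ : 1 ≤ domNumber G) {S : Set V} (hS : S.ncard = domNumber G - 1) :
    ∃ w, w ∉ S ∧ NH G w = S := by
  have hnd : ¬ IsDomSet G S := by
    intro hd
    have := domNumber_le_ncard hd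
    omega
  unfold IsDomSet at hnd
  push_neg at hnd
  obtain ⟨w, hwS, hw⟩ := hnd
  have hsub : S ⊆ NH G w := fun x hx =>
    ⟨fun hxw => hwS (hxw ▸ hx), fun hadj => hw x hx hadj.symm⟩
  have hlt := ncard_NH_lt h w
  exact ⟨w, hwS, (Set.eq_of_subset_of_ncard_le hsub (by omega) (Set.toFinite _)).symm⟩

lemma NH_step (h : ∀ S : Set V, S.ncard = domNumber G → IsDomSet G S)
    [Nonempty V] (hγ3 : 3 ≤ domNumber G) {S : Set V} {w s : V}
    (hW : NH G w = S) (hwS : w ∉ S) (hS : S.ncard = domNumber G - 1) (hs : s ∈ S) :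
    NH G s = insert w (S \ {s}) := by
  have hS1 : (insert w (S \ {s})).ncard = domNumber G - 1 := by
    rw [Set.ncard_insert_of_notMem (fun hw => hwS hw.1) (Set.toFinite _),
      Set.ncard_diff_singleton_of_mem hs, hS]
    omega
  obtain ⟨w₁, hw₁, hNH⟩ := exists_NH_eq h (by omega) hS1
  have hwmem : w ∈ NH G w₁ := by rw [hNH]; exact Set.mem_insert _ _
  have hw₁S : w₁ ∈ S := by rw [← hW]; exact mem_NH_comm.mp hwmem
  have hw₁s : w₁ = s := by
    by_contra hne
    exact hw₁ (Set.mem_insert_of_mem _ ⟨hw₁S, hne⟩)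
  subst hw₁s
  exact hNH

lemma domNumber_le_two (h : ∀ S : Set V, S.ncard = domNumber G → IsDomSet G S)
    [Nonempty V] (hcard : domNumber G + 2 ≤ Fintype.card V) : domNumber G ≤ 2 := by
  by_contra hγ
  push_neg at hγ
  have hγ3 : 3 ≤ domNumber G := hγ
  have hγ1 : 1 ≤ domNumber G := by omega
  obtain ⟨S, -, hS⟩ := Set.exists_subset_card_eq
    (s := (Set.univ : Set V)) (n := domNumber G - 1)
    (by rw [Set.ncard_univ, Nat.card_eq_fintype_card]; omega)
  obtain ⟨w, hwS, hW⟩ := exists_NH_eq h hγ1 hS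
  obtain ⟨s₁, hs₁, s₂, hs₂, hne⟩ := (Set.one_lt_ncard (Set.toFinite S)).mp (by omega)
  have htex : insert w S ≠ Set.univ := by
    intro hu
    have h1 : (insert w S).ncard = domNumber G - 1 + 1 := by
      rw [Set.ncard_insert_of_notMem hwS (Set.toFinite _), hS]
    rw [hu, Set.ncard_univ, Nat.card_eq_fintype_card] at h1
    omega
  obtain ⟨t, ht⟩ := (Set.ne_univ_iff_exists_notMem _).mp htex
  have htw : t ≠ w := fun he => ht (he ▸ Set.mem_insert _ _)
  have htS : t ∉ S := fun he => ht (Set.mem_insert_of_mem _ he)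
  have h1 := NH_step h hγ3 hW hwS hS hs₁
  have h2 := NH_step h hγ3 hW hwS hS hs₂
  have hS'' : (insert t (S \ {s₁})).ncard = domNumber G - 1 := by
    rw [Set.ncard_insert_of_notMem (fun hc => htS hc.1) (Set.toFinite _),
      Set.ncard_diff_singleton_of_mem hs₁, hS]
    omega
  obtain ⟨w'', hw'', hNH''⟩ := exists_NH_eq h hγ1 hS''
  have hs2mem : s₂ ∈ insert t (S \ {s₁}) := Set.mem_insert_of_mem _ ⟨hs₂, hne.symm⟩
  have hw''mem : w'' ∈ NH G s₂ := by
    apply mem_NH_comm.mp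
    rw [hNH'']
    exact hs2mem
  rw [h2] at hw''mem
  rcases hw''mem with rfl | ⟨hw''S, -⟩
  · -- w'' = w : then NH w = S and NH w = insert t (S \ {s₁})
    rw [hW] at hNH''
    have : t ∈ S := hNH'' ▸ Set.mem_insert _ _
    exact htS this
  · -- w'' ∈ S, so w'' = s₁
    have hw''s₁ : w'' = s₁ := by
      by_contra hc
      exact hw'' (Set.mem_insert_of_mem _ ⟨hw''S, hc⟩)
    have hNH2 : NH G w'' = insert w (S \ {s₁}) := by rw [hw''s₁]; exact h1
    have hwmem : w ∈ insert t (S \ {s₁}) := by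
      rw [← hNH'', hNH2]; exact Set.mem_insert _ _
    rcases Set.mem_insert_iff.mp hwmem with rfl | ⟨hwS', -⟩
    · exact htw rfl
    · exact hwS hwS'

end DomAux

section Degree
variable {V : Type*} [Fintype V] {G : SimpleGraph V} {k : ℕ}

abbrev KVert (G : SimpleGraph V) (k : ℕ) := {D : Set V // IsDomSet G D ∧ D.ncard ≤ k}

lemma kdom_adj_iff {A B : KVert G k} :
    (KDomGraph G k).Adj A B ↔ (symmDiff A.1 B.1).ncard = 1 := Iff.rfl

open Classical in
noncomputable def phi (D : Set V) (v : V) : Set V := if v ∈ D then D \ {v} else insert v D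

lemma symmDiff_phi (D : Set V) (v : V) : symmDiff D (phi D v) = {v} := by
  unfold phi
  by_cases hv : v ∈ D
  · rw [if_pos hv]; exact symmDiff_diff_singleton_self hv
  · rw [if_neg hv]; exact symmDiff_insert_self hv

lemma phi_injective (D : Set V) : Function.Injective (phi D) := by
  intro u v huv
  have h1 : ({u} : Set V) = {v} := by
    rw [← symmDiff_phi D u, ← symmDiff_phi D v, huv]
  simpa [Set.singleton_eq_singleton_iff] using h1

lemma ncard_phi_insert (D : Set V) {v : V} (hv : v ∉ D) :
    (phi D v).ncard = D.ncard + 1 := by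
  rw [phi, if_neg hv, Set.ncard_insert_of_notMem hv (Set.toFinite _)]

lemma ncard_phi_diff (D : Set V) {v : V} (hv : v ∈ D) :
    (phi D v).ncard = D.ncard - 1 := by
  rw [phi, if_pos hv, Set.ncard_diff_singleton_of_mem hv]

lemma kdom_neighbor_image
    (h : ∀ S : Set V, S.ncard = domNumber G → IsDomSet G S) [Nonempty V]
    (hγk : domNumber G < k) (A : KVert G k) :
    Subtype.val '' ((KDomGraph G k).neighborSet A) =
      phi A.1 '' ((if A.1.ncard < k then A.1ᶜ else ∅) ∪
        (if domNumber G < A.1.ncard then A.1 else ∅)) := by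
  have hγ1 : 1 ≤ domNumber G := one_le_domNumber G
  have hγA : domNumber G ≤ A.1.ncard := domNumber_le_ncard A.2.1
  ext B'
  constructor
  · rintro ⟨B, hBN, rfl⟩
    have hadj : (symmDiff A.1 B.1).ncard = 1 := hBN
    rcases ncard_symmDiff_eq_one_iff.mp hadj with ⟨v, hv, hB⟩ | ⟨v, hv, hB⟩
    · -- B.1 = insert v A.1
      have hlt : A.1.ncard < k := by
        have h1 : B.1.ncard = A.1.ncard + 1 := by
          rw [hB, Set.ncard_insert_of_notMem hv (Set.toFinite _)]
        have := B.2.2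
        omega
      refine ⟨v, Set.mem_union_left _ ?_, ?_⟩
      · rw [if_pos hlt]; exact hv
      · rw [phi, if_neg hv, hB]
    · -- B.1 = A.1 \ {v}
      have h1 : B.1.ncard = A.1.ncard - 1 := by
        rw [hB, Set.ncard_diff_singleton_of_mem hv]
      have h2 : domNumber G ≤ B.1.ncard := domNumber_le_ncard B.2.1
      have h3 : 0 < A.1.ncard := (Set.ncard_pos (Set.toFinite _)).mpr ⟨v, hv⟩
      have hlt : domNumber G < A.1.ncard := by omega
      refine ⟨v, Set.mem_union_right _ ?_, ?_⟩
      · rw [if_pos hlt]; exact hv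
      · rw [phi, if_pos hv, hB]
  · rintro ⟨v, hv, rfl⟩
    rcases hv with hv | hv
    · -- addition case
      by_cases hlt : A.1.ncard < k
      · rw [if_pos hlt] at hv
        have hvA : v ∉ A.1 := hv
        have hcard : (phi A.1 v).ncard = A.1.ncard + 1 := ncard_phi_insert _ hvA
        have hdom : IsDomSet G (phi A.1 v) := (isDomSet_iff_le h).mpr (by omega)
        refine ⟨⟨phi A.1 v, hdom, by omega⟩, ?_, rfl⟩
        show (symmDiff A.1 (phi A.1 v)).ncard = 1
        rw [symmDiff_phi]
        exact Set.ncard_singleton v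
      · rw [if_neg hlt] at hv
        exact absurd hv (Set.notMem_empty v)
    · -- removal case
      by_cases hlt : domNumber G < A.1.ncard
      · rw [if_pos hlt] at hv
        have hcard : (phi A.1 v).ncard = A.1.ncard - 1 := ncard_phi_diff _ hv
        have hdom : IsDomSet G (phi A.1 v) := (isDomSet_iff_le h).mpr (by omega)
        refine ⟨⟨phi A.1 v, hdom, by have := A.2.2; omega⟩, ?_, rfl⟩
        show (symmDiff A.1 (phi A.1 v)).ncard = 1
        rw [symmDiff_phi]
        exact Set.ncard_singleton v
      · rw [if_neg hlt] at hv
        exact absurd hv (Set.notMem_empty v)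

lemma kdom_degree
    (h : ∀ S : Set V, S.ncard = domNumber G → IsDomSet G S) [Nonempty V]
    (hγk : domNumber G < k) (A : KVert G k) :
    ((KDomGraph G k).neighborSet A).ncard =
      (if A.1.ncard < k then Fintype.card V - A.1.ncard else 0) +
      (if domNumber G < A.1.ncard then A.1.ncard else 0) := by
  have h1 : ((KDomGraph G k).neighborSet A).ncard
      = (Subtype.val '' ((KDomGraph G k).neighborSet A)).ncard :=
    (Set.ncard_image_of_injective _ Subtype.val_injective).symm
  rw [h1, kdom_neighbor_image h hγk A,
    Set.ncard_image_of_injective _ (phi_injective A.1)]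
  have hdn : A.1.ncard + A.1ᶜ.ncard = Fintype.card V := by
    rw [Set.ncard_add_ncard_compl, Nat.card_eq_fintype_card]
  by_cases h2 : A.1.ncard < k <;> by_cases h3 : domNumber G < A.1.ncard
  · rw [if_pos h2, if_pos h3, if_pos h2, if_pos h3, Set.compl_union_self,
      Set.ncard_univ, Nat.card_eq_fintype_card]
    omega
  · rw [if_pos h2, if_neg h3, if_pos h2, if_neg h3, Set.union_empty]
    omega
  · rw [if_neg h2, if_pos h3, if_neg h2, if_pos h3, Set.empty_union]
    omega
  · exfalso
    have := A.2.2
    have := domNumber_le_ncard A.2.1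
    omega

end Degree

section Reach
variable {V : Type*} [Fintype V] {G : SimpleGraph V} {k : ℕ}

lemma kdom_reachable_aux
    (h : ∀ S : Set V, S.ncard = domNumber G → IsDomSet G S) [Nonempty V]
    (hγk : domNumber G < k) :
    ∀ m : ℕ, ∀ A B : KVert G k, (symmDiff A.1 B.1).ncard = m →
      (KDomGraph G k).Reachable A B := by
  intro m
  induction m with
  | zero =>
    intro A B hm
    have h0 : symmDiff A.1 B.1 = ∅ := by
      rwa [Set.ncard_eq_zero (Set.toFinite _)] at hm
    have : A.1 = B.1 := by
      rwa [← Set.bot_eq_empty, symmDiff_eq_bot] at h0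
    exact Reachable.refl A |>.mono le_rfl |>.trans (by rw [Subtype.ext this])
  | succ m ih =>
    intro A B hm
    have hγA : domNumber G ≤ A.1.ncard := domNumber_le_ncard A.2.1
    have hγB : domNumber G ≤ B.1.ncard := domNumber_le_ncard B.2.1
    have hstep : ∃ A' : KVert G k, (KDomGraph G k).Adj A A' ∧
        (symmDiff A'.1 B.1).ncard = m := by
      by_cases hBA : (B.1 \ A.1).Nonempty
      · obtain ⟨b, hbB, hbA⟩ := hBA
        by_cases hAk : A.1.ncard < k
        · -- add b
          have hcard : (insert b A.1).ncard = A.1.ncard + 1 :=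
            Set.ncard_insert_of_notMem hbA (Set.toFinite _)
          have hdom : IsDomSet G (insert b A.1) := (isDomSet_iff_le h).mpr (by omega)
          refine ⟨⟨insert b A.1, hdom, by omega⟩, ?_, ?_⟩
          · show (symmDiff A.1 (insert b A.1)).ncard = 1
            rw [symmDiff_insert_self hbA]
            exact Set.ncard_singleton b
          · show (symmDiff (insert b A.1) B.1).ncard = m
            rw [symmDiff_insert_left hbB hbA,
              Set.ncard_diff_singleton_of_mem (by
                rw [Set.mem_symmDiff]; exact Or.inr ⟨hbB, hbA⟩), hm]
            omega
        · -- A has size k; remove some a ∈ A \ B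
          have hAke : A.1.ncard = k := le_antisymm A.2.2 (not_lt.mp hAk)
          rcases Set.eq_empty_or_nonempty (A.1 \ B.1) with he | ⟨a, haA, haB⟩
          · exfalso
            have hsub : A.1 ⊆ B.1 := by rwa [Set.diff_eq_empty] at he
            have hss : A.1 ⊂ B.1 := ⟨hsub, fun hc => hbA (hc hbB)⟩
            have := Set.ncard_lt_ncard hss (Set.toFinite _)
            have := B.2.2
            omega
          · have hcard : (A.1 \ {a}).ncard = A.1.ncard - 1 :=
              Set.ncard_diff_singleton_of_mem haA
            have hdom : IsDomSet G (A.1 \ {a}) := (isDomSet_iff_le h).mpr (by omega)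
            refine ⟨⟨A.1 \ {a}, hdom, by omega⟩, ?_, ?_⟩
            · show (symmDiff A.1 (A.1 \ {a})).ncard = 1
              rw [symmDiff_diff_singleton_self haA]
              exact Set.ncard_singleton a
            · show (symmDiff (A.1 \ {a}) B.1).ncard = m
              rw [symmDiff_diff_left haA haB,
                Set.ncard_diff_singleton_of_mem (by
                  rw [Set.mem_symmDiff]; exact Or.inl ⟨haA, haB⟩), hm]
              omega
      · -- B ⊆ A; remove some a ∈ A \ B
        have hsub : B.1 ⊆ A.1 := by
          rw [Set.not_nonempty_iff_eq_empty, Set.diff_eq_empty] at hBA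
          exact hBA
        have hsd : (symmDiff A.1 B.1).Nonempty :=
          Set.nonempty_of_ncard_ne_zero (by omega)
        obtain ⟨a, ha⟩ := hsd
        rw [Set.mem_symmDiff] at ha
        obtain ⟨haA, haB⟩ : a ∈ A.1 ∧ a ∉ B.1 := by
          rcases ha with h1 | h2
          · exact h1
          · exact absurd (hsub h2.1) h2.2
        have hBsub : B.1 ⊆ A.1 \ {a} := fun x hx =>
          ⟨hsub hx, fun hxa => haB (by rwa [← Set.mem_singleton_iff.mp hxa])⟩
        have hBle : B.1.ncard ≤ (A.1 \ {a}).ncard :=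
          Set.ncard_le_ncard hBsub (Set.toFinite _)
        have hcard : (A.1 \ {a}).ncard = A.1.ncard - 1 :=
          Set.ncard_diff_singleton_of_mem haA
        have hdom : IsDomSet G (A.1 \ {a}) := (isDomSet_iff_le h).mpr (by omega)
        refine ⟨⟨A.1 \ {a}, hdom, by have := A.2.2; omega⟩, ?_, ?_⟩
        · show (symmDiff A.1 (A.1 \ {a})).ncard = 1
          rw [symmDiff_diff_singleton_self haA]
          exact Set.ncard_singleton a
        · show (symmDiff (A.1 \ {a}) B.1).ncard = m
          rw [symmDiff_diff_left haA haB,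
            Set.ncard_diff_singleton_of_mem (by
              rw [Set.mem_symmDiff]; exact Or.inl ⟨haA, haB⟩), hm]
          omega
    obtain ⟨A', hadj, hc⟩ := hstep
    exact (hadj.reachable).trans (ih A' B hc)

lemma kdom_reachable
    (h : ∀ S : Set V, S.ncard = domNumber G → IsDomSet G S) [Nonempty V]
    (hγk : domNumber G < k) (A B : KVert G k) : (KDomGraph G k).Reachable A B :=
  kdom_reachable_aux h hγk _ A B rfl

lemma exists_kvert (h : ∀ S : Set V, S.ncard = domNumber G → IsDomSet G S)
    {m : ℕ} (hm1 : domNumber G ≤ m) (hm2 : m ≤ k) (hmn : m ≤ Fintype.card V) :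
    ∃ A : KVert G k, A.1.ncard = m := by
  obtain ⟨S, -, hS⟩ := Set.exists_subset_card_eq (s := (Set.univ : Set V)) (n := m)
    (by rw [Set.ncard_univ, Nat.card_eq_fintype_card]; exact hmn)
  exact ⟨⟨S, (isDomSet_iff_le h).mpr (by omega), by omega⟩, hS⟩

lemma eulerian_iff_parity
    (h : ∀ S : Set V, S.ncard = domNumber G → IsDomSet G S) [Nonempty V]
    (hγk : domNumber G < k) (hkn : k < Fintype.card V) :
    IsEulerian (KDomGraph G k) ↔
      (Even (Fintype.card V - domNumber G) ∧ Even k ∧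
        (domNumber G + 2 ≤ k → Even (Fintype.card V))) := by
  have hγA : domNumber G + 2 ≤ Fintype.card V := by omega
  constructor
  · rintro ⟨hdeg, -⟩
    refine ⟨?_, ?_, ?_⟩
    · obtain ⟨A, hA⟩ := exists_kvert h le_rfl (le_of_lt hγk) (by omega)
      have := hdeg A
      rw [kdom_degree h hγk A, hA, if_pos hγk, if_neg (lt_irrefl _)] at this
      simpa using this
    · obtain ⟨A, hA⟩ := exists_kvert h (le_of_lt hγk) le_rfl (by omega)
      have := hdeg A
      rw [kdom_degree h hγk A, hA, if_neg (lt_irrefl _), if_pos hγk] at this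
      simpa using this
    · intro hk2
      obtain ⟨A, hA⟩ := exists_kvert h (k := k) (m := domNumber G + 1) (by omega)
        (by omega) (by omega)
      have := hdeg A
      rw [kdom_degree h hγk A, hA, if_pos (by omega), if_pos (by omega)] at this
      have heq : Fintype.card V - (domNumber G + 1) + (domNumber G + 1)
          = Fintype.card V := by omega
      rwa [heq] at this
  · rintro ⟨hP1, hP2, hP3⟩
    constructor
    · intro A
      rw [kdom_degree h hγk A]
      have hγ : domNumber G ≤ A.1.ncard := domNumber_le_ncard A.2.1
      have hk : A.1.ncard ≤ k := A.2.2
      by_cases h2 : A.1.ncard < k <;> by_cases h3 : domNumber G < A.1.ncard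
      · rw [if_pos h2, if_pos h3]
        have hn : Even (Fintype.card V) := hP3 (by omega)
        have hle : A.1.ncard ≤ Fintype.card V := by omega
        have heq : Fintype.card V - A.1.ncard + A.1.ncard = Fintype.card V := by omega
        rw [heq]
        exact hn
      · rw [if_pos h2, if_neg h3]
        have : A.1.ncard = domNumber G := by omega
        rw [this]
        simpa using hP1
      · rw [if_neg h2, if_pos h3]
        have : A.1.ncard = k := by omega
        rw [this]
        simpa using hP2
      · omega
    · intro u v x y _ _
      exact kdom_reachable h hγk u x

end Reach

section Classify
variable {V : Type*} [Fintype V] {G : SimpleGraph V}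

lemma eq_top_of_domNumber_one
    (h : ∀ S : Set V, S.ncard = domNumber G → IsDomSet G S)
    (hγ : domNumber G = 1) : G = ⊤ := by
  ext u v
  simp only [top_adj]
  constructor
  · exact fun ha => ha.ne
  · intro huv
    have hdom : IsDomSet G {u} := h {u} (by rw [Set.ncard_singleton, hγ])
    obtain ⟨w, hw, ha⟩ := hdom v (by simpa using (Ne.symm huv))
    rw [Set.mem_singleton_iff] at hw
    rwa [hw] at ha

lemma cocktail_of_domNumber_two
    (h : ∀ S : Set V, S.ncard = domNumber G → IsDomSet G S) [Nonempty V]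
    (hγ : domNumber G = 2) : IsCocktailParty G := by
  have hone : ∀ v : V, ∃ a, NH G v = {a} := by
    intro v
    have hlt : (NH G v).ncard < 2 := hγ ▸ ncard_NH_lt h v
    have hpos : (NH G v).Nonempty := by
      rcases Set.eq_empty_or_nonempty (NH G v) with he | hne
      · exfalso
        have hdom : IsDomSet G {v} := by
          intro w hw
          refine ⟨v, Set.mem_singleton v, ?_⟩
          have hwv : w ≠ v := by simpa using hw
          by_contra hna
          have : w ∈ NH G v := ⟨hwv, hna⟩
          rw [he] at this
          exact Set.notMem_empty _ this
        have := domNumber_le_ncard hdom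
        rw [Set.ncard_singleton, hγ] at this
        omega
      · exact hne
    have h1 : (NH G v).ncard = 1 := by
      have := (Set.ncard_pos (Set.toFinite _)).mpr hpos
      omega
    exact Set.ncard_eq_one.mp h1
  choose f hf using hone
  have hmem : ∀ v, f v ∈ NH G v := fun v => by rw [hf v]; exact rfl
  have hfix : ∀ v, f v ≠ v := fun v => (hmem v).1
  have hnadj : ∀ v, ¬ G.Adj v (f v) := fun v => (hmem v).2
  have hinv : Function.Involutive f := by
    intro v
    have : v ∈ NH G (f v) := mem_NH_comm.mpr (hmem v)
    have h2 := hf (f v)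
    rw [h2, Set.mem_singleton_iff] at this
    exact this.symm
  refine ⟨f, hinv, hfix, fun u v => ?_⟩
  constructor
  · intro ha
    refine ⟨ha.ne, fun hfu => ?_⟩
    rw [← hfu] at ha
    exact hnadj u ha
  · rintro ⟨huv, hfuv⟩
    by_contra hna
    have : v ∈ NH G u := ⟨Ne.symm huv, hna⟩
    rw [hf u, Set.mem_singleton_iff] at this
    exact hfuv this.symm

lemma not_cocktail_of_top [Nonempty V] (hG : G = ⊤) (hcp : IsCocktailParty G) : False := by
  obtain ⟨f, hinv, hfix, hadj⟩ := hcp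
  obtain v := Classical.arbitrary V
  have h1 : G.Adj v (f v) := by
    rw [hG]
    simp only [top_adj]
    exact (hfix v).symm
  exact ((hadj v (f v)).mp h1).2 rfl

end Classify

/-- Let `G` be a connected graph on `n > 1` vertices in which every set of `γ(G)`
vertices is a dominating set, and let `γ(G) < k < n`.  Then the `k`-dominating graph of
`G` is Eulerian iff `G` is complete with `n` odd and `k = 2`, or `G` is the cocktail
party graph on an even number `n ≥ 4` of vertices and `k` is even. -/
theorem kDomGraph_eulerian_iff_of_all_dominating {V : Type*} [Fintype V]
    (G : SimpleGraph V) (hconn : G.Connected) (hn : 1 < Fintype.card V)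
    (h : ∀ S : Set V, S.ncard = domNumber G → IsDomSet G S)
    (k : ℕ) (hk1 : domNumber G < k) (hk2 : k < Fintype.card V) :
    IsEulerian (KDomGraph G k) ↔
      (G = ⊤ ∧ Odd (Fintype.card V) ∧ k = 2) ∨
      (Even (Fintype.card V) ∧ 4 ≤ Fintype.card V ∧ IsCocktailParty G ∧ Even k) := by
  have hne : Nonempty V := Fintype.card_pos_iff.mp (by omega)
  have hγ1 : 1 ≤ domNumber G := one_le_domNumber G
  have hγn : domNumber G + 2 ≤ Fintype.card V := by omega
  have hγ2 : domNumber G ≤ 2 := domNumber_le_two h hγn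
  rw [eulerian_iff_parity h hk1 hk2]
  rcases (by omega : domNumber G = 1 ∨ domNumber G = 2) with hγ | hγ
  · have hG : G = ⊤ := eq_top_of_domNumber_one h hγ
    constructor
    · rintro ⟨hP1, hP2, hP3⟩
      rw [hγ] at hP1 hP3
      rw [Nat.even_iff] at hP1 hP2
      have hodd : Odd (Fintype.card V) := by rw [Nat.odd_iff]; omega
      have hk2' : k = 2 := by
        by_contra hc
        have h3 : 3 ≤ k := by omega
        have := hP3 (by omega)
        rw [Nat.even_iff] at this
        rw [Nat.odd_iff] at hodd
        omega
      exact Or.inl ⟨hG, hodd, hk2'⟩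
    · rintro (⟨-, hodd, hk⟩ | ⟨-, -, hcp, -⟩)
      · subst hk
        rw [Nat.odd_iff] at hodd
        refine ⟨?_, by decide, ?_⟩
        · rw [hγ, Nat.even_iff]; omega
        · intro h3; rw [hγ] at h3; omega
      · exact absurd hcp (fun hc => not_cocktail_of_top hG hc)
  · have hcp : IsCocktailParty G := cocktail_of_domNumber_two h hγ
    constructor
    · rintro ⟨hP1, hP2, hP3⟩
      rw [hγ] at hP1
      rw [Nat.even_iff] at hP1
      exact Or.inr ⟨by rw [Nat.even_iff]; omega, by omega, hcp, hP2⟩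
    · rintro (⟨hG, -, -⟩ | ⟨heven, -, -, hkeven⟩)
      · exact absurd hcp (fun hc => not_cocktail_of_top hG hc)
      · rw [Nat.even_iff] at heven
        exact ⟨by rw [hγ, Nat.even_iff]; omega, hkeven, fun _ => by rw [Nat.even_iff]; omega⟩
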